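/- Let b, β be real numbers with 0 ≤ b < 1 and β ≥ 2, and set c = √(1 - b^2) and s₀ = (β-1)·(1-c)/(β-1+c). Define F(s) = b^2 · s/(1-s) - s^2/(1-s) - s^2/(β-1+s). Then s₀ ∈ [0,1), F(s₀) = ((β-1)/β) · (1-c)^2, and F(s) ≤ F(s₀) for every s ∈ [0,1); that is, the supremum of F over [0,1) equals ((β-1)/β)(1-c)^2 and is attained at s₀. -/

import Mathlib

set_option maxHeartbeats 1000000

/-- Lemma 2.6 (exact-supremum part): for `0 ≤ b < 1`, `β ≥ 2`, `c = √(1 - b²)` and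
`s₀ = (β-1)(1-c)/(β-1+c)`, the function `F(s) = b²·s/(1-s) - s²/(1-s) - s²/(β-1+s)`
attains its maximum over `[0,1)` at `s₀`, with value `((β-1)/β)(1-c)²`. -/
theorem F_max_attained (b β : ℝ) (hb0 : 0 ≤ b) (hb1 : b < 1) (hβ : 2 ≤ β)
    (c : ℝ) (hc : c = Real.sqrt (1 - b ^ 2))
    (s₀ : ℝ) (hs₀ : s₀ = (β - 1) * (1 - c) / (β - 1 + c))
    (F : ℝ → ℝ)
    (hF : ∀ s, F s = b ^ 2 * s / (1 - s) - s ^ 2 / (1 - s) - s ^ 2 / (β - 1 + s)) :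
    s₀ ∈ Set.Ico (0 : ℝ) 1 ∧
      F s₀ = ((β - 1) / β) * (1 - c) ^ 2 ∧
      ∀ s ∈ Set.Ico (0 : ℝ) 1, F s ≤ F s₀ := by
  have hb2' : (0:ℝ) < 1 - b ^ 2 := by nlinarith
  have hcpos : 0 < c := by rw [hc]; exact Real.sqrt_pos.mpr hb2'
  have hc1 : c ≤ 1 := by
    rw [hc]; exact Real.sqrt_le_one.mpr (by nlinarith)
  have hc2 : c ^ 2 = 1 - b ^ 2 := by
    rw [hc, sq, Real.mul_self_sqrt hb2'.le]
  have hb2 : b ^ 2 = 1 - c ^ 2 := by linarith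
  have hβ0 : (0:ℝ) < β := by linarith
  have hden : (0:ℝ) < β - 1 + c := by linarith
  -- s₀ ∈ [0,1)
  have hs0nn : 0 ≤ s₀ := by
    rw [hs₀]
    apply div_nonneg (by nlinarith) (by linarith)
  have hs0lt : s₀ < 1 := by
    rw [hs₀, div_lt_one hden]; nlinarith
  -- key algebraic identity
  have key : ∀ s : ℝ, (1 - s) ≠ 0 → (β - 1 + s) ≠ 0 →
      β * ((((β - 1) / β) * (1 - c) ^ 2) - F s) * ((1 - s) * (β - 1 + s)) =
        ((β - 1 + c) * s - (β - 1) * (1 - c)) ^ 2 := by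
    intro s h1 h2
    rw [hF, hb2]
    field_simp
    ring
  have h1s₀ : (1 - s₀) ≠ 0 := by linarith
  have h2s₀ : (β - 1 + s₀) ≠ 0 := by nlinarith
  have hroot : (β - 1 + c) * s₀ - (β - 1) * (1 - c) = 0 := by
    rw [hs₀]; field_simp; ring
  have hval : F s₀ = ((β - 1) / β) * (1 - c) ^ 2 := by
    have := key s₀ h1s₀ h2s₀
    rw [hroot] at this
    have hpos : 0 < (1 - s₀) * (β - 1 + s₀) := by nlinarith
    nlinarith [this, mul_pos hβ0 hpos]
  refine ⟨⟨hs0nn, hs0lt⟩, hval, ?_⟩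
  intro s hs
  obtain ⟨hs0, hs1⟩ := hs
  have h1 : (0:ℝ) < 1 - s := by linarith
  have h2 : (0:ℝ) < β - 1 + s := by linarith
  have hk := key s (by linarith) (by linarith)
  rw [hval]
  nlinarith [hk, sq_nonneg ((β - 1 + c) * s - (β - 1) * (1 - c)), mul_pos hβ0 (mul_pos h1 h2)]
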